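/- Let S be a finite type, R a binary relation on S, s₀ ∈ S, and F ⊆ S. Then the following are equivalent: (1) there exists an infinite sequence σ : ℕ → S with σ(0) = s₀, R(σ(i), σ(i+1)) for all i, and σ(i) ∈ F for infinitely many i; (2) there exists f ∈ F such that f is reachable from s₀ by a (possibly empty) finite R-path and f is reachable from f by an R-path of length at least 1. -/

import Mathlib

private lemma rtg_of_run {S : Type*} {R : S → S → Prop} (σ : ℕ → S)
    (h : ∀ i, R (σ i) (σ (i + 1))) : ∀ n, Relation.ReflTransGen R (σ 0) (σ n)
  | 0 => .refl
  | (n + 1) => (rtg_of_run σ h n).tail (h n)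

private lemma tg_of_run {S : Type*} {R : S → S → Prop} (σ : ℕ → S)
    (h : ∀ i, R (σ i) (σ (i + 1))) {i j : ℕ} (hij : i < j) :
    Relation.TransGen R (σ i) (σ j) := by
  induction j with
  | zero => omega
  | succ j ih =>
    rcases Nat.lt_succ_iff_lt_or_eq.mp hij with h' | rfl
    · exact (ih h').tail (h j)
    · exact .single (h i)

/-- Lasso characterization of Büchi nonemptiness: over a finite state space `S`,
there is an infinite run from `s₀` along the relation `R` visiting the set `F` of
accepting states infinitely often if and only if some accepting state `f ∈ F` is
reachable from `s₀` (by a possibly empty finite `R`-path) and lies on an `R`-cycle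
(a path from `f` to `f` of length at least `1`). -/
theorem buchi_nonempty_iff_lasso {S : Type*} [Fintype S]
    (R : S → S → Prop) (s₀ : S) (F : Set S) :
    (∃ σ : ℕ → S, σ 0 = s₀ ∧ (∀ i, R (σ i) (σ (i + 1))) ∧ ∀ N, ∃ i ≥ N, σ i ∈ F) ↔
    (∃ f ∈ F, Relation.ReflTransGen R s₀ f ∧ Relation.TransGen R f f) := by
  constructor
  · rintro ⟨σ, h0, hstep, hF⟩
    have hA : {i | σ i ∈ F}.Infinite := by
      intro hfin
      obtain ⟨b, hb⟩ := hfin.bddAbove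
      obtain ⟨i, hib, hiF⟩ := hF (b + 1)
      exact absurd (hb hiF) (by omega)
    haveI : Infinite {i | σ i ∈ F} := hA.to_subtype
    obtain ⟨f₀, hfib⟩ := Finite.exists_infinite_fiber
      (fun i : {i | σ i ∈ F} => σ i)
    have hB : {i : ℕ | σ i ∈ F ∧ σ i = f₀}.Infinite := by
      have h1 : ((fun i : {i | σ i ∈ F} => σ i) ⁻¹' {f₀} : Set _).Infinite :=
        Set.infinite_coe_iff.mp hfib
      have h2 := h1.image (Set.injOn_of_injective Subtype.val_injective)
      refine h2.mono ?_
      rintro _ ⟨⟨i, hi⟩, hx, rfl⟩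
      exact ⟨hi, hx⟩
    obtain ⟨x, hxF, hx⟩ := hB.nonempty
    obtain ⟨y, hy, hxy⟩ := hB.exists_gt x
    refine ⟨f₀, hx ▸ hxF, ?_, ?_⟩
    · exact hx ▸ h0 ▸ rtg_of_run σ hstep x
    · have := tg_of_run σ hstep hxy
      rwa [hx, hy.2] at this
  · rintro ⟨f, hfF, hreach, hcyc⟩
    obtain ⟨l₁, hc₁, hl₁⟩ := List.exists_isChain_cons_of_relationReflTransGen hreach
    obtain ⟨c, hfc, hcf⟩ := Relation.TransGen.head'_iff.mp hcyc
    obtain ⟨l₂, hc₂, hl₂⟩ := List.exists_isChain_cons_of_relationReflTransGen hcf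
    set p : List S := s₀ :: l₁ with hp
    set q : List S := c :: l₂ with hq
    have hpne : p ≠ [] := by simp [hp]
    have hqne : q ≠ [] := by simp [hq]
    have hL₂ : 0 < q.length := List.length_pos_iff.mpr hqne
    have hp' : List.Chain' R p := hc₁
    have hq' : List.Chain' R q := hc₂
    have hplen : 0 < p.length := List.length_pos_iff.mpr hpne
    have hplast : p[p.length - 1]'(by omega) = f := by
      rw [← List.getLast_eq_getElem hpne]; exact hl₁
    have hqlast : q[q.length - 1]'(by omega) = f := by
      rw [← List.getLast_eq_getElem hqne]; exact hl₂
    have hq0 : q[0] = c := rfl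
    refine ⟨fun n => if h : n < p.length then p[n]
        else q[(n - p.length) % q.length]'(Nat.mod_lt _ hL₂), ?_, ?_, ?_⟩
    · have h0 : 0 < p.length := by simp [hp]
      simp [h0, hp]
    · intro n
      by_cases h1 : n + 1 < p.length
      · have h2 : n < p.length := by omega
        simp only [dif_pos h1, dif_pos h2]
        exact List.isChain_iff_getElem.mp hp' n (by omega)
      · by_cases h2 : n < p.length
        · -- boundary: n = p.length - 1
          have hn : n = p.length - 1 := by omega
          have h3 : n + 1 - p.length = 0 := by omega
          simp only [dif_pos h2, dif_neg h1, h3, Nat.zero_mod]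
          rw [hq0]
          subst hn
          rw [hplast]
          exact hfc
        · -- both in the cycle
          have h3 : ¬ n + 1 < p.length := h1
          simp only [dif_neg h2, dif_neg h3]
          set m := n - p.length with hm
          have hm1 : n + 1 - p.length = m + 1 := by omega
          rw [hm1]
          by_cases h4 : m % q.length + 1 < q.length
          · have h5 : (m + 1) % q.length = m % q.length + 1 := by
              rw [Nat.add_mod, Nat.mod_eq_of_lt (show 1 < q.length by omega),
                Nat.mod_eq_of_lt h4]
            simp only [h5]
            exact List.isChain_iff_getElem.mp hq' (m % q.length) (by omega)
          · have h6 : m % q.length = q.length - 1 := by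
              have := Nat.mod_lt m hL₂; omega
            have h7 : (m + 1) % q.length = 0 := by
              rw [Nat.add_mod, h6]
              simp [Nat.sub_add_cancel hL₂]
            simp only [h6, h7]
            rw [hq0, hqlast]
            exact hfc
    · intro N
      refine ⟨p.length + N * q.length + (q.length - 1), ?_, ?_⟩
      · have : N ≤ N * q.length := Nat.le_mul_of_pos_right N hL₂
        omega
      · have h2 : ¬ p.length + N * q.length + (q.length - 1) < p.length := by
          omega
        simp only [dif_neg h2]
        have h3 : p.length + N * q.length + (q.length - 1) - p.length
            = (q.length - 1) + N * q.length := by omega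
        simp only [h3, Nat.add_mul_mod_self_right,
          Nat.mod_eq_of_lt (show q.length - 1 < q.length by omega)]
        rw [hqlast]
        exact hfF
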